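/- Suppose in addition that H is a group. Then for every f : X → L, both the regularized minorant f∧ and the regularized majorant f∨ are 𝔥-homogeneous. (Proposition 3, group part.) -/
import Mathlib


/-- `f : X → L` is `𝔥`-homogeneous: `f (h • x) = 𝔥 h • f x`. -/
def IsHomog {H T X L : Type*} [Monoid H] [Monoid T] [MulAction H X]
    [SMul T L] (𝔥 : H →* T) (f : X → L) : Prop :=
  ∀ (h : H) (x : X), f (h • x) = 𝔥 h • f x

/-- The regularized minorant `f∧(x) := ⨅ h, (𝔥 h)⁻¹ • f (h • x)`. -/
def regMin {H T X L : Type*} [Monoid H] [Group T] [MulAction H X]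
    [CompleteLattice L] [MulAction T L] (𝔥 : H →* T) (f : X → L) : X → L :=
  fun x => ⨅ h : H, (𝔥 h)⁻¹ • f (h • x)

/-- The regularized majorant `f∨(x) := ⨆ h, (𝔥 h)⁻¹ • f (h • x)`. -/
def regMaj {H T X L : Type*} [Monoid H] [Group T] [MulAction H X]
    [CompleteLattice L] [MulAction T L] (𝔥 : H →* T) (f : X → L) : X → L :=
  fun x => ⨆ h : H, (𝔥 h)⁻¹ • f (h • x)

section Aux
variable {T L : Type*} [Group T] [CompleteLattice L] [MulAction T L]

/-- The order isomorphism given by a monotone group action. -/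
def smulIso (hmono : ∀ (t : T) (s₁ s₂ : L), s₁ ≤ s₂ → t • s₁ ≤ t • s₂) (t : T) : L ≃o L where
  toEquiv := MulAction.toPerm t
  map_rel_iff' := by
    intro a b
    constructor
    · intro hle
      have := hmono t⁻¹ _ _ hle
      simpa using this
    · exact hmono t a b

lemma smul_iInf' {ι : Sort*} (hmono : ∀ (t : T) (s₁ s₂ : L), s₁ ≤ s₂ → t • s₁ ≤ t • s₂)
    (t : T) (g : ι → L) : t • ⨅ i, g i = ⨅ i, t • g i :=
  (smulIso hmono t).map_iInf g

lemma smul_iSup' {ι : Sort*} (hmono : ∀ (t : T) (s₁ s₂ : L), s₁ ≤ s₂ → t • s₁ ≤ t • s₂)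
    (t : T) (g : ι → L) : t • ⨆ i, g i = ⨆ i, t • g i :=
  (smulIso hmono t).map_iSup g

end Aux

/-- **Proposition 3, group part.** If `H` is a group, the regularized minorant
`f∧` and the regularized majorant `f∨` are `𝔥`-homogeneous. -/
theorem prop3_group {H T X L : Type*} [Group H] [Group T] [MulAction H X]
    [CompleteLattice L] [MulAction T L] (𝔥 : H →* T)
    (hmono : ∀ (t : T) (s₁ s₂ : L), s₁ ≤ s₂ → t • s₁ ≤ t • s₂)
    (f : X → L) :
    IsHomog 𝔥 (regMin 𝔥 f) ∧ IsHomog 𝔥 (regMaj 𝔥 f) := by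
  constructor <;> intro h x
  · rw [show regMin 𝔥 f (h • x) = ⨅ g : H, (𝔥 (g * h⁻¹))⁻¹ • f ((g * h⁻¹) • h • x) from
      ((Equiv.mulRight h⁻¹).iInf_congr (fun g => rfl)).symm]
    rw [regMin, smul_iInf' hmono]
    exact iInf_congr fun g => by
      rw [mul_smul, inv_smul_smul, map_mul, map_inv, mul_inv_rev, inv_inv, smul_smul]
  · rw [show regMaj 𝔥 f (h • x) = ⨆ g : H, (𝔥 (g * h⁻¹))⁻¹ • f ((g * h⁻¹) • h • x) from
      ((Equiv.mulRight h⁻¹).iSup_congr (fun g => rfl)).symm]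
    rw [regMaj, smul_iSup' hmono]
    exact iSup_congr fun g => by
      rw [mul_smul, inv_smul_smul, map_mul, map_inv, mul_inv_rev, inv_inv, smul_smul]
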